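/- The dual action of G on the character group of N satisfies: for g = (n,k,l̄) ∈ G and the character χ_{ω₁,ω₂,j}, the character χ ∘ (conjugation by g⁻¹) equals χ_{ω₁, ω₂', j} where ω₂' = ω₂ + jn/L − ⌊ω₂ + jn/L⌋. In particular the first coordinate ω₁ and the index j are invariant under the dual action. -/

import Mathlib

def gmul (L : ℕ) (a b : ℤ × ℤ × ZMod L) : ℤ × ℤ × ZMod L :=
  (a.1 + b.1, a.2.1 + b.2.1, a.2.2 + b.2.2 + ((b.2.1 * a.1 : ℤ) : ZMod L))

def ginv (L : ℕ) (a : ℤ × ℤ × ZMod L) : ℤ × ℤ × ZMod L :=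
  (-a.1, -a.2.1, -a.2.2 + ((a.2.1 * a.1 : ℤ) : ZMod L))

/-- The character `χ_{ω₁,ω₂,j}` of `N = {(nL,k,l̄)} ⊆ G`, written at the element level:
`χ_{ω₁,ω₂,j}(nL,k,l̄) = e^{2πi(ω₁n + ω₂k + jl/L)}` (for `x ∈ N` the first coordinate
`x.1` is a multiple of `L`, and `n = x.1/L`). -/
noncomputable def chiE (L : ℕ) (ω₁ ω₂ : ℝ) (j : ℕ) (x : ℤ × ℤ × ZMod L) : ℂ :=
  Complex.exp (2 * Real.pi * Complex.I *
    ((ω₁ : ℂ) * ((x.1 / L : ℤ) : ℂ) + (ω₂ : ℂ) * x.2.1 + (j : ℂ) * (x.2.2.val : ℤ) / L))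

/-- the dual action of `g = (n,k,l̄) ∈ G` on the character `χ_{ω₁,ω₂,j}` of
`N` gives the character `χ_{ω₁,ω₂',j}` with `ω₂' = ω₂ + jn/L − ⌊ω₂ + jn/L⌋`; in particular
`ω₁` and `j` are invariant. -/
theorem dual_action (L : ℕ) (hL : 1 ≤ L) (ω₁ ω₂ : ℝ) (j : ℕ) (hj : j < L)
    (hω₁ : ω₁ ∈ Set.Ico (0:ℝ) 1) (hω₂ : ω₂ ∈ Set.Ico (0:ℝ) 1)
    (g : ℤ × ℤ × ZMod L) :
    ∀ x : ℤ × ℤ × ZMod L, (L : ℤ) ∣ x.1 →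
      chiE L ω₁ ω₂ j (gmul L (gmul L g x) (ginv L g))
        = chiE L ω₁ (Int.fract (ω₂ + (j : ℝ) * (g.1 : ℝ) / L)) j x := by
  intro x hx
  haveI : NeZero L := ⟨by omega⟩
  have hLC : (L : ℂ) ≠ 0 := by exact_mod_cast (Nat.cast_ne_zero (R := ℂ)).2 (by omega)
  have h0 : ((x.1 : ℤ) : ZMod L) = 0 := by
    obtain ⟨m, hm⟩ := hx
    rw [hm]; push_cast; simp
  have hstep : gmul L (gmul L g x) (ginv L g)
      = (x.1, x.2.1, x.2.2 + ((x.2.1 * g.1 : ℤ) : ZMod L)) := by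
    simp only [gmul, ginv]
    refine Prod.ext (by ring) (Prod.ext (by ring) ?_)
    push_cast [h0]
    ring
  rw [hstep]
  unfold chiE
  -- integer relation between the vals
  set V1 : ℤ := ((x.2.2 + ((x.2.1 * g.1 : ℤ) : ZMod L)).val : ℤ) with hV1
  set V0 : ℤ := (x.2.2.val : ℤ) with hV0
  have hdvd : (L : ℤ) ∣ (V0 + x.2.1 * g.1 - V1) := by
    rw [← ZMod.intCast_zmod_eq_zero_iff_dvd]
    push_cast [hV0, hV1, ZMod.natCast_val, ZMod.cast_id]
    ring
  obtain ⟨t, ht⟩ := hdvd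
  set M : ℤ := ⌊ω₂ + (j : ℝ) * (g.1 : ℝ) / L⌋ with hM
  rw [Complex.exp_eq_exp_iff_exists_int]
  refine ⟨M * x.2.1 - j * t, ?_⟩
  have hfr : ((Int.fract (ω₂ + (j : ℝ) * (g.1 : ℝ) / L) : ℝ) : ℂ)
      = (ω₂ : ℂ) + (j : ℂ) * (g.1 : ℂ) / L - (M : ℂ) := by
    rw [← Int.self_sub_floor]
    push_cast [hM]
    ring
  have hV1C : (V1 : ℂ) = (V0 : ℂ) + (x.2.1 : ℂ) * (g.1 : ℂ) - (L : ℂ) * t := by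
    have : V1 = V0 + x.2.1 * g.1 - L * t := by omega
    exact_mod_cast congrArg (Int.cast : ℤ → ℂ) this
  rw [hfr, hV1C]
  field_simp
  push_cast
  ring
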